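/- arXiv:2004.03730 — 2 statements merged into one kernel-verified Lean document; each statement's English description precedes it below -/
import Mathlib

section
/- Let σ: ℝ → ℝ₊ be locally Lipschitz and let T be a compact set of positive Lebesgue measure. Given r > 0 and measurable y, y': D × T → ℝ with ‖y‖_{L^∞}, ‖y'‖_{L^∞} < r, define (P_σ y)(x,t) = σ(y(x,t)) / ∫_T σ(y(x,t')) dt'. Then there exists ε(r) > 0 such that ε(r) ≤ P_σ y, P_σ y' ≤ ε(r)^{-1}, and there exists C_σ(r) such that ‖P_σ y − P_σ y'‖_{L²(D;L²(T))} ≤ C_σ(r) ‖y − y'‖_{L²(D;L²(T))}. -/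
open MeasureTheory Metric Set

/-- The normalization operator `P_σ`: `(P_σ y)(x,t) = σ(y(x,t)) / ∫_T σ(y(x,t')) dt'`. -/
noncomputable def Psig {D : Type*} {p : ℕ} (T : Set (EuclideanSpace ℝ (Fin p)))
    (σ : ℝ → ℝ) (y : D → EuclideanSpace ℝ (Fin p) → ℝ)
    (x : D) (t : EuclideanSpace ℝ (Fin p)) : ℝ :=
  σ (y x t) / ∫ t' in T, σ (y x t')


lemma locallyLipschitz.lipschitzOnWith_of_compact {f : ℝ → ℝ} (hf : LocallyLipschitz f)
    {s : Set ℝ} (hs : IsCompact s) : ∃ L : NNReal, LipschitzOnWith L f s := by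
  rcases s.eq_empty_or_nonempty with rfl | hne
  · exact ⟨0, by simp⟩
  have hfc : Continuous f := hf.continuous
  choose Kc tc htc hlip using hf
  obtain ⟨F, hFs, hFcov⟩ := hs.elim_nhds_subcover (fun x => interior (tc x))
    (fun x _ => interior_mem_nhds.2 (htc x))
  obtain ⟨δ, hδ, hball⟩ := lebesgue_number_lemma_of_metric (ι := {i // i ∈ F})
    (c := fun i => interior (tc i.1)) hs (fun i => isOpen_interior)
    (by intro x hx
        rcases Set.mem_iUnion₂.1 (hFcov hx) with ⟨i, hiF, hxi⟩
        exact Set.mem_iUnion.2 ⟨⟨i, hiF⟩, hxi⟩)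
  obtain ⟨c, hcs, hc⟩ := hs.exists_isMaxOn hne
    ((continuous_abs.comp hfc).continuousOn)
  set A : ℝ := |f c| with hA
  have hA0 : 0 ≤ A := abs_nonneg _
  set L : NNReal := F.sup Kc ⊔ Real.toNNReal (2 * A / δ) with hL
  refine ⟨L, LipschitzOnWith.of_dist_le_mul fun a ha b hb => ?_⟩
  rcases lt_or_ge (dist a b) δ with hlt | hge
  · obtain ⟨i, hi⟩ := hball a ha
    have hai : a ∈ tc i.1 := interior_subset (hi (mem_ball_self hδ))
    have hbi : b ∈ tc i.1 := interior_subset (hi (by simpa [mem_ball, dist_comm] using hlt))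
    calc dist (f a) (f b) ≤ Kc i.1 * dist a b := (hlip i.1).dist_le_mul a hai b hbi
      _ ≤ L * dist a b := by
          gcongr
          exact_mod_cast (Finset.le_sup i.2).trans le_sup_left
  · have h2A : dist (f a) (f b) ≤ 2 * A := by
      have h1 : |f a| ≤ A := by simpa using hc ha
      have h2 : |f b| ≤ A := by simpa using hc hb
      calc dist (f a) (f b) ≤ |f a| + |f b| := by
            rw [Real.dist_eq]; exact (abs_sub _ _)
        _ ≤ 2 * A := by linarith
    have hLge : 2 * A / δ ≤ (L : ℝ) := by
      have : (Real.toNNReal (2 * A / δ) : ℝ) = 2 * A / δ :=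
        Real.coe_toNNReal _ (by positivity)
      rw [← this]; exact_mod_cast le_sup_right
    calc dist (f a) (f b) ≤ 2 * A := h2A
      _ = (2 * A / δ) * δ := by field_simp
      _ ≤ L * dist a b := mul_le_mul hLge hge hδ.le (by positivity)

lemma sq_setIntegral_le {α : Type*} [MeasurableSpace α] {μ : Measure α} {s : Set α}
    (hs : μ s ≠ ⊤) {f : α → ℝ} (hf : IntegrableOn f s μ)
    (hf2 : IntegrableOn (fun x => f x ^ 2) s μ) :
    (∫ x in s, f x ∂μ) ^ 2 ≤ (μ s).toReal * ∫ x in s, f x ^ 2 ∂μ := by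
  by_cases h0 : μ s = 0
  · simp [Measure.restrict_eq_zero.2 h0]
  set τ := (μ s).toReal with hτdef
  have hτ : 0 < τ := ENNReal.toReal_pos h0 hs
  set I := ∫ x in s, f x ∂μ with hI
  set Q := ∫ x in s, f x ^ 2 ∂μ with hQ
  have key : 0 ≤ ∫ x in s, (τ * f x - I) ^ 2 ∂μ := integral_nonneg fun x => sq_nonneg _
  have expand : ∫ x in s, (τ * f x - I) ^ 2 ∂μ = τ ^ 2 * Q - 2 * τ * I * I + τ * I ^ 2 := by
    have h : ∀ x, (τ * f x - I) ^ 2 = τ ^ 2 * f x ^ 2 - (2 * τ * I) * f x + I ^ 2 :=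
      fun x => by ring
    simp_rw [h]
    have e1 : ∫ x in s, (τ ^ 2 * f x ^ 2 - 2 * τ * I * f x + I ^ 2) ∂μ
        = (∫ x in s, (τ ^ 2 * f x ^ 2 - 2 * τ * I * f x) ∂μ) + ∫ _x in s, (I ^ 2 : ℝ) ∂μ :=
      integral_add ((hf2.const_mul _).sub (hf.const_mul _))
        (integrableOn_const hs)
    have e2 : ∫ x in s, (τ ^ 2 * f x ^ 2 - 2 * τ * I * f x) ∂μ
        = (∫ x in s, τ ^ 2 * f x ^ 2 ∂μ) - ∫ x in s, 2 * τ * I * f x ∂μ :=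
      integral_sub (hf2.const_mul _) (hf.const_mul _)
    rw [e1, e2, integral_const_mul, integral_const_mul, setIntegral_const, smul_eq_mul, measureReal_def]
  nlinarith [key, hτ]

set_option maxHeartbeats 1600000 in
/-- For locally Lipschitz positive `σ` and data bounded in `L^∞` by `r`, the normalized
functions `P_σ y`, `P_σ y'` are bounded between `ε(r)` and `ε(r)⁻¹`, and `P_σ` is
Lipschitz in `L²(D;L²(T))`. -/
theorem Psig_bounds_and_L2_lipschitz {p : ℕ} {D : Type*} [MeasurableSpace D]
    (lam : Measure D) [IsFiniteMeasure lam]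
    (T : Set (EuclideanSpace ℝ (Fin p))) (hTcomp : IsCompact T) (hTm : MeasurableSet T)
    (hTpos : 0 < volume T)
    (σ : ℝ → ℝ) (hσpos : ∀ s : ℝ, 0 < σ s) (hσlip : LocallyLipschitz σ)
    (r : ℝ) (hr : 0 < r)
    (y y' : D → EuclideanSpace ℝ (Fin p) → ℝ)
    (hym : Measurable (Function.uncurry y)) (hy'm : Measurable (Function.uncurry y'))
    (hy : ∀ x t, |y x t| < r) (hy' : ∀ x t, |y' x t| < r) :
    (∃ ε : ℝ, 0 < ε ∧ ∀ x : D, ∀ t ∈ T,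
        (ε ≤ Psig T σ y x t ∧ Psig T σ y x t ≤ ε⁻¹) ∧
        (ε ≤ Psig T σ y' x t ∧ Psig T σ y' x t ≤ ε⁻¹)) ∧
    (∃ C : ℝ, 0 < C ∧
      Real.sqrt (∫ x, (∫ t in T, (Psig T σ y x t - Psig T σ y' x t) ^ 2) ∂lam)
        ≤ C * Real.sqrt (∫ x, (∫ t in T, (y x t - y' x t) ^ 2) ∂lam)) := by
  classical
  have hσc : Continuous σ := hσlip.continuous
  have hKne : (Set.Icc (-r) r).Nonempty := Set.nonempty_Icc.2 (by linarith)
  obtain ⟨cm, hcm, hmins⟩ := isCompact_Icc.exists_isMinOn hKne hσc.continuousOn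
  obtain ⟨cM, hcM, hmaxs⟩ := isCompact_Icc.exists_isMaxOn hKne hσc.continuousOn
  set m := σ cm with hmdef
  set M := σ cM with hMdef
  have hm : 0 < m := hσpos cm
  have hMm : m ≤ M := by simpa using hmins hcM
  have hM : 0 < M := lt_of_lt_of_le hm hMm
  have hbd : ∀ (z : D → EuclideanSpace ℝ (Fin p) → ℝ), (∀ x t, |z x t| < r) →
      ∀ x t, m ≤ σ (z x t) ∧ σ (z x t) ≤ M := by
    intro z hz x t
    have hmem : z x t ∈ Set.Icc (-r) r := by
      have := abs_le.1 (hz x t).le; exact ⟨this.1, this.2⟩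
    exact ⟨by simpa using hmins hmem, by simpa using hmaxs hmem⟩
  obtain ⟨Lnn, hLσ⟩ := locallyLipschitz.lipschitzOnWith_of_compact hσlip
    (isCompact_Icc : IsCompact (Set.Icc (-r) r))
  set Lr : ℝ := (Lnn : ℝ) with hLrdef
  have hLr0 : 0 ≤ Lr := Lnn.coe_nonneg
  have hσlipK : ∀ z z' : D → EuclideanSpace ℝ (Fin p) → ℝ, (∀ x t, |z x t| < r) →
      (∀ x t, |z' x t| < r) → ∀ x t, |σ (z x t) - σ (z' x t)| ≤ Lr * |z x t - z' x t| := by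
    intro z z' hz hz' x t
    have h1 : z x t ∈ Set.Icc (-r) r := by
      have := abs_le.1 (hz x t).le; exact ⟨this.1, this.2⟩
    have h2 : z' x t ∈ Set.Icc (-r) r := by
      have := abs_le.1 (hz' x t).le; exact ⟨this.1, this.2⟩
    simpa [Real.dist_eq] using hLσ.dist_le_mul _ h1 _ h2
  have hTfin : volume T ≠ ⊤ := hTcomp.measure_lt_top.ne
  set τ : ℝ := (volume T).toReal with hτdef
  have hτ : 0 < τ := ENNReal.toReal_pos hTpos.ne' hTfin
  -- integrability package
  have pack : ∀ (z : D → EuclideanSpace ℝ (Fin p) → ℝ),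
      Measurable (Function.uncurry z) → (∀ x t, |z x t| < r) → ∀ x : D,
      Measurable (fun t => z x t) ∧ IntegrableOn (fun t => σ (z x t)) T volume ∧
      m * τ ≤ (∫ t' in T, σ (z x t')) ∧ (∫ t' in T, σ (z x t')) ≤ M * τ := by
    intro z hzm hz x
    have hmz : Measurable fun t => z x t := hzm.comp measurable_prodMk_left
    have hmσz : Measurable fun t => σ (z x t) := hσc.measurable.comp hmz
    have hint : IntegrableOn (fun t => σ (z x t)) T volume :=
      Measure.integrableOn_of_bounded hTfin hmσz.aestronglyMeasurable
        (ae_of_all _ fun t => by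
          rw [Real.norm_eq_abs, abs_of_pos (hσpos _)]
          exact (hbd z hz x t).2)
    refine ⟨hmz, hint, ?_, ?_⟩
    · calc m * τ = ∫ _t in T, m := by rw [setIntegral_const, smul_eq_mul, measureReal_def]; ring
        _ ≤ ∫ t in T, σ (z x t) :=
          setIntegral_mono_on (integrableOn_const hTfin) hint hTm
            (fun t _ => (hbd z hz x t).1)
    · calc (∫ t in T, σ (z x t)) ≤ ∫ _t in T, M :=
          setIntegral_mono_on hint (integrableOn_const hTfin) hTm
            (fun t _ => (hbd z hz x t).2)
        _ = M * τ := by rw [setIntegral_const, smul_eq_mul, measureReal_def]; ring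
  set ε : ℝ := min (m / (M * τ)) (m * τ / M) with hεdef
  have hε : 0 < ε := lt_min (by positivity) (by positivity)
  have Pbound : ∀ (z : D → EuclideanSpace ℝ (Fin p) → ℝ),
      Measurable (Function.uncurry z) → (∀ x t, |z x t| < r) → ∀ x t,
      ε ≤ Psig T σ z x t ∧ Psig T σ z x t ≤ ε⁻¹ := by
    intro z hzm hz x t
    obtain ⟨-, hint, hlb, hub⟩ := pack z hzm hz x
    have hI : (0 : ℝ) < ∫ t' in T, σ (z x t') := lt_of_lt_of_le (by positivity) hlb
    have ha := hbd z hz x t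
    constructor
    · calc ε ≤ m / (M * τ) := min_le_left _ _
        _ ≤ σ (z x t) / (∫ t' in T, σ (z x t')) := div_le_div₀ (hσpos _).le ha.1 hI hub
        _ = Psig T σ z x t := rfl
    · calc Psig T σ z x t = σ (z x t) / (∫ t' in T, σ (z x t')) := rfl
        _ ≤ M / (m * τ) := div_le_div₀ hM.le ha.2 (by positivity) hlb
        _ = (m * τ / M)⁻¹ := by rw [inv_div]
        _ ≤ ε⁻¹ := inv_anti₀ hε (min_le_right _ _)
  refine ⟨⟨ε, hε, fun x t _ => ⟨Pbound y hym hy x t, Pbound y' hy'm hy' x t⟩⟩, ?_⟩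
  -- Lipschitz part
  set C₁ : ℝ := 2 * (Lr / (m * τ)) ^ 2 + 2 * ((M * Lr) / ((m * τ) ^ 2)) ^ 2 * τ ^ 2 with hC₁def
  have hC₁0 : 0 ≤ C₁ := by positivity
  have key : ∀ x, (∫ t in T, (Psig T σ y x t - Psig T σ y' x t) ^ 2)
      ≤ C₁ * ∫ t in T, (y x t - y' x t) ^ 2 := by
    intro x
    obtain ⟨hmy, hinty, hylb, hyub⟩ := pack y hym hy x
    obtain ⟨hmy', hinty', hy'lb, hy'ub⟩ := pack y' hy'm hy' x
    set I : ℝ := ∫ t' in T, σ (y x t') with hIdef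
    set I' : ℝ := ∫ t' in T, σ (y' x t') with hI'def
    have hI0 : 0 < I := lt_of_lt_of_le (by positivity) hylb
    have hI'0 : 0 < I' := lt_of_lt_of_le (by positivity) hy'lb
    set J : ℝ := ∫ t in T, |y x t - y' x t| with hJdef
    set S : ℝ := ∫ t in T, (y x t - y' x t) ^ 2 with hSdef
    have hmyd : Measurable fun t => y x t - y' x t := hmy.sub hmy'
    have hydb : ∀ t, |y x t - y' x t| ≤ 2 * r := fun t =>
      le_trans (abs_sub _ _) (by linarith [(hy x t).le, (hy' x t).le])
    have hintJ : IntegrableOn (fun t => |y x t - y' x t|) T volume :=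
      Measure.integrableOn_of_bounded hTfin hmyd.abs.aestronglyMeasurable
        (ae_of_all _ fun t => by rw [Real.norm_eq_abs, abs_abs]; exact hydb t)
    have hintS : IntegrableOn (fun t => (y x t - y' x t) ^ 2) T volume :=
      Measure.integrableOn_of_bounded hTfin (hmyd.pow_const 2).aestronglyMeasurable
        (ae_of_all _ fun t => by
          rw [Real.norm_eq_abs, abs_of_nonneg (sq_nonneg _), ← sq_abs]
          exact pow_le_pow_left₀ (abs_nonneg _) (hydb t) 2)
    have hJ0 : 0 ≤ J := integral_nonneg fun t => abs_nonneg _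
    have hS0 : 0 ≤ S := integral_nonneg fun t => sq_nonneg _
    have hJS : J ^ 2 ≤ τ * S := by
      have habs2 : (fun t => |y x t - y' x t| ^ 2) = fun t => (y x t - y' x t) ^ 2 :=
        funext fun t => sq_abs _
      have h := sq_setIntegral_le hTfin hintJ (habs2 ▸ hintS)
      rw [habs2] at h
      exact h
    have hII' : |I - I'| ≤ Lr * J := by
      have h1 : I - I' = ∫ t in T, (σ (y x t) - σ (y' x t)) := (integral_sub hinty hinty').symm
      rw [h1]
      calc |∫ t in T, (σ (y x t) - σ (y' x t))|
          ≤ ∫ t in T, |σ (y x t) - σ (y' x t)| := by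
            simpa [Real.norm_eq_abs] using norm_integral_le_integral_norm
              (μ := volume.restrict T) (fun t => σ (y x t) - σ (y' x t))
        _ ≤ ∫ t in T, Lr * |y x t - y' x t| :=
            setIntegral_mono_on (hinty.sub hinty').abs (hintJ.const_mul _) hTm
              (fun t _ => hσlipK y y' hy hy' x t)
        _ = Lr * J := integral_const_mul _ _
    have hquad : ∀ t, (Psig T σ y x t - Psig T σ y' x t) ^ 2
        ≤ 2 * (Lr / (m * τ)) ^ 2 * (y x t - y' x t) ^ 2
          + 2 * ((M * Lr) / ((m * τ) ^ 2)) ^ 2 * J ^ 2 := by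
      intro t
      have ha := hbd y hy x t
      have ha' := hbd y' hy' x t
      have hPdef : Psig T σ y x t - Psig T σ y' x t
          = σ (y x t) / I - σ (y' x t) / I' := rfl
      have e1 : σ (y x t) / I - σ (y' x t) / I'
          = (σ (y x t) - σ (y' x t)) / I + σ (y' x t) * (I' - I) / (I * I') := by
        field_simp; ring
      have habs : |σ (y x t) / I - σ (y' x t) / I'|
          ≤ |σ (y x t) - σ (y' x t)| / I + σ (y' x t) * |I' - I| / (I * I') := by
        rw [e1]
        refine (abs_add_le _ _).trans (le_of_eq ?_)
        rw [abs_div, abs_div, abs_mul, abs_of_pos hI0, abs_of_pos (mul_pos hI0 hI'0),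
          abs_of_pos (hσpos _)]
      have hu : |σ (y x t) - σ (y' x t)| / I ≤ Lr * |y x t - y' x t| / (m * τ) :=
        div_le_div₀ (by positivity) (hσlipK y y' hy hy' x t) (by positivity) hylb
      have hv : σ (y' x t) * |I' - I| / (I * I') ≤ M * (Lr * J) / ((m * τ) * (m * τ)) := by
        apply div_le_div₀ (mul_nonneg hM.le (mul_nonneg hLr0 hJ0)) ?_ (by positivity) ?_
        · exact mul_le_mul ha'.2 (by rw [abs_sub_comm]; exact hII') (abs_nonneg _) hM.le
        · exact mul_le_mul hylb hy'lb (by positivity) hI0.le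
      set u : ℝ := Lr * |y x t - y' x t| / (m * τ) with hudef
      set v : ℝ := M * (Lr * J) / ((m * τ) * (m * τ)) with hvdef
      have hP : |σ (y x t) / I - σ (y' x t) / I'| ≤ u + v := habs.trans (add_le_add hu hv)
      have hu0 : 0 ≤ u := by positivity
      have hv0 : 0 ≤ v := by
        apply div_nonneg (mul_nonneg hM.le (mul_nonneg hLr0 hJ0)) (by positivity)
      have hsq : (σ (y x t) / I - σ (y' x t) / I') ^ 2 ≤ (u + v) ^ 2 := by
        rw [← sq_abs]; exact pow_le_pow_left₀ (abs_nonneg _) hP 2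
      have h2uv : (u + v) ^ 2 ≤ 2 * u ^ 2 + 2 * v ^ 2 := by
        calc (u + v) ^ 2 = u ^ 2 + v ^ 2 + 2 * u * v := by ring
          _ ≤ u ^ 2 + v ^ 2 + (u ^ 2 + v ^ 2) := add_le_add le_rfl (two_mul_le_add_sq u v)
          _ = 2 * u ^ 2 + 2 * v ^ 2 := by ring
      have hu2 : u ^ 2 = (Lr / (m * τ)) ^ 2 * (y x t - y' x t) ^ 2 := by
        rw [show u = (Lr / (m * τ)) * |y x t - y' x t| by rw [hudef]; ring,
          mul_pow, sq_abs]
      have hv2 : v ^ 2 = ((M * Lr) / ((m * τ) ^ 2)) ^ 2 * J ^ 2 := by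
        rw [show v = ((M * Lr) / ((m * τ) ^ 2)) * J by rw [hvdef]; ring, mul_pow]
      rw [hPdef]
      calc (σ (y x t) / I - σ (y' x t) / I') ^ 2 ≤ 2 * u ^ 2 + 2 * v ^ 2 := hsq.trans h2uv
        _ = 2 * (Lr / (m * τ)) ^ 2 * (y x t - y' x t) ^ 2
            + 2 * ((M * Lr) / ((m * τ) ^ 2)) ^ 2 * J ^ 2 := by rw [hu2, hv2]; ring
    have hPmeas : Measurable fun t => Psig T σ y x t - Psig T σ y' x t :=
      ((hσc.measurable.comp hmy).div_const I).sub ((hσc.measurable.comp hmy').div_const I')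
    have hPb : ∀ t, |Psig T σ y x t - Psig T σ y' x t| ≤ ε⁻¹ := by
      intro t
      have h1 := Pbound y hym hy x t
      have h2 := Pbound y' hy'm hy' x t
      exact abs_le.2 ⟨by linarith [h1.1, h2.2, hε.le], by linarith [h1.2, h2.1, hε.le]⟩
    have hintP2 : IntegrableOn (fun t => (Psig T σ y x t - Psig T σ y' x t) ^ 2) T volume :=
      Measure.integrableOn_of_bounded hTfin (hPmeas.pow_const 2).aestronglyMeasurable
        (ae_of_all _ fun t => by
          rw [Real.norm_eq_abs, abs_of_nonneg (sq_nonneg _), ← sq_abs]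
          exact pow_le_pow_left₀ (abs_nonneg _) (hPb t) 2)
    have hintRHS1 : IntegrableOn
        (fun t => 2 * (Lr / (m * τ)) ^ 2 * (y x t - y' x t) ^ 2) T volume :=
      hintS.const_mul _
    have hintRHS2 : IntegrableOn
        (fun t : EuclideanSpace ℝ (Fin p) => 2 * ((M * Lr) / ((m * τ) ^ 2)) ^ 2 * J ^ 2)
        T volume := integrableOn_const hTfin
    have eadd : ∫ t in T, (2 * (Lr / (m * τ)) ^ 2 * (y x t - y' x t) ^ 2
          + 2 * ((M * Lr) / ((m * τ) ^ 2)) ^ 2 * J ^ 2)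
        = (∫ t in T, 2 * (Lr / (m * τ)) ^ 2 * (y x t - y' x t) ^ 2)
          + ∫ _t in T, 2 * ((M * Lr) / ((m * τ) ^ 2)) ^ 2 * J ^ 2 :=
      integral_add hintRHS1 hintRHS2
    have step1 : (∫ t in T, (Psig T σ y x t - Psig T σ y' x t) ^ 2)
        ≤ ∫ t in T, (2 * (Lr / (m * τ)) ^ 2 * (y x t - y' x t) ^ 2
            + 2 * ((M * Lr) / ((m * τ) ^ 2)) ^ 2 * J ^ 2) :=
      setIntegral_mono_on hintP2 (hintRHS1.add hintRHS2) hTm (fun t _ => hquad t)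
    have step2 : (∫ t in T, (2 * (Lr / (m * τ)) ^ 2 * (y x t - y' x t) ^ 2
            + 2 * ((M * Lr) / ((m * τ) ^ 2)) ^ 2 * J ^ 2))
        = 2 * (Lr / (m * τ)) ^ 2 * S + τ * (2 * ((M * Lr) / ((m * τ) ^ 2)) ^ 2 * J ^ 2) := by
      rw [eadd, integral_const_mul, setIntegral_const, smul_eq_mul, measureReal_def]
    have step3 : 2 * (Lr / (m * τ)) ^ 2 * S + τ * (2 * ((M * Lr) / ((m * τ) ^ 2)) ^ 2 * J ^ 2)
        ≤ C₁ * S := by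
      have h4 : 2 * (Lr / (m * τ)) ^ 2 * S + τ * (2 * ((M * Lr) / ((m * τ) ^ 2)) ^ 2 * J ^ 2)
          = 2 * (Lr / (m * τ)) ^ 2 * S + (2 * ((M * Lr) / ((m * τ) ^ 2)) ^ 2 * τ) * J ^ 2 := by
        ring
      have h5 : 2 * (Lr / (m * τ)) ^ 2 * S + (2 * ((M * Lr) / ((m * τ) ^ 2)) ^ 2 * τ) * J ^ 2
          ≤ 2 * (Lr / (m * τ)) ^ 2 * S + (2 * ((M * Lr) / ((m * τ) ^ 2)) ^ 2 * τ) * (τ * S) :=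
        add_le_add le_rfl (mul_le_mul_of_nonneg_left hJS
          (show (0:ℝ) ≤ 2 * ((M * Lr) / ((m * τ) ^ 2)) ^ 2 * τ by positivity))
      have h6 : 2 * (Lr / (m * τ)) ^ 2 * S + (2 * ((M * Lr) / ((m * τ) ^ 2)) ^ 2 * τ) * (τ * S)
          = C₁ * S := by rw [hC₁def]; ring
      rw [h4]; rw [← h6]; exact h5
    exact step1.trans (step2.trans_le step3)
  -- integrate over D
  have hGmeas : AEStronglyMeasurable (fun x => ∫ t in T, (y x t - y' x t) ^ 2) lam :=
    (((hym.sub hy'm).pow_const 2).stronglyMeasurable.integral_prod_right').aestronglyMeasurable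
  have hGb : ∀ x, ‖∫ t in T, (y x t - y' x t) ^ 2‖ ≤ τ * (2 * r) ^ 2 := by
    intro x
    obtain ⟨hmy, -, -, -⟩ := pack y hym hy x
    obtain ⟨hmy', -, -, -⟩ := pack y' hy'm hy' x
    have hmyd : Measurable fun t => y x t - y' x t := hmy.sub hmy'
    have hydb : ∀ t, |y x t - y' x t| ≤ 2 * r := fun t =>
      le_trans (abs_sub _ _) (by linarith [(hy x t).le, (hy' x t).le])
    have hintS : IntegrableOn (fun t => (y x t - y' x t) ^ 2) T volume :=
      Measure.integrableOn_of_bounded hTfin (hmyd.pow_const 2).aestronglyMeasurable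
        (ae_of_all _ fun t => by
          rw [Real.norm_eq_abs, abs_of_nonneg (sq_nonneg _), ← sq_abs]
          exact pow_le_pow_left₀ (abs_nonneg _) (hydb t) 2)
    rw [Real.norm_eq_abs, abs_of_nonneg (integral_nonneg fun t => sq_nonneg _)]
    calc (∫ t in T, (y x t - y' x t) ^ 2) ≤ ∫ _t in T, (2 * r) ^ 2 :=
        setIntegral_mono_on hintS (integrableOn_const hTfin) hTm
          (fun t _ => by rw [← sq_abs]; exact pow_le_pow_left₀ (abs_nonneg _) (hydb t) 2)
      _ = τ * (2 * r) ^ 2 := by rw [setIntegral_const, smul_eq_mul, measureReal_def]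
  have hGint : Integrable (fun x => ∫ t in T, (y x t - y' x t) ^ 2) lam :=
    (integrable_const (τ * (2 * r) ^ 2)).mono' hGmeas (ae_of_all _ hGb)
  have hle : (∫ x, (∫ t in T, (Psig T σ y x t - Psig T σ y' x t) ^ 2) ∂lam)
      ≤ ∫ x, C₁ * (∫ t in T, (y x t - y' x t) ^ 2) ∂lam :=
    integral_mono_of_nonneg (ae_of_all _ fun x => integral_nonneg fun t => sq_nonneg _)
      (hGint.const_mul _) (ae_of_all _ key)
  have hfin : (∫ x, C₁ * (∫ t in T, (y x t - y' x t) ^ 2) ∂lam)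
      = C₁ * ∫ x, (∫ t in T, (y x t - y' x t) ^ 2) ∂lam := integral_const_mul _ _
  refine ⟨Real.sqrt C₁ + 1, by positivity, ?_⟩
  calc Real.sqrt (∫ x, (∫ t in T, (Psig T σ y x t - Psig T σ y' x t) ^ 2) ∂lam)
      ≤ Real.sqrt (C₁ * ∫ x, (∫ t in T, (y x t - y' x t) ^ 2) ∂lam) :=
        Real.sqrt_le_sqrt (hle.trans_eq hfin)
    _ = Real.sqrt C₁ * Real.sqrt (∫ x, (∫ t in T, (y x t - y' x t) ^ 2) ∂lam) :=
        Real.sqrt_mul hC₁0 _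
    _ ≤ (Real.sqrt C₁ + 1) * Real.sqrt (∫ x, (∫ t in T, (y x t - y' x t) ^ 2) ∂lam) :=
        mul_le_mul_of_nonneg_right (by linarith) (Real.sqrt_nonneg _)
end

section
/- Let Z, Z' > 0 satisfy Z, Z' ≥ c > 0, and let Φ, Φ': X → [0, ∞) be measurable with ∫ e^{−Φ} dπ₀ = Z, ∫ e^{−Φ'} dπ₀ = Z'. Then the Hellinger distance between π = Z^{-1} e^{−Φ} π₀ and π' = (Z')^{-1} e^{−Φ'} π₀ satisfies d_H(π, π')² ≤ (1/c) ∫_X (e^{−Φ(u)/2} − e^{−Φ'(u)/2})² π₀(du) + C |Z − Z'|² for a constant C depending only on c. -/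
open MeasureTheory

private lemma exp_half_integrable {X : Type*} [MeasurableSpace X]
    (π₀ : Measure X) [IsProbabilityMeasure π₀]
    (ψ : X → ℝ) (hm : Measurable ψ) (hψ : ∀ u, 0 ≤ ψ u) :
    Integrable (fun u => Real.exp (-ψ u / 2)) π₀ := by
  refine (integrable_const (1 : ℝ)).mono' ?_ ?_
  · exact ((hm.neg.div_const 2).exp).aestronglyMeasurable
  · filter_upwards with u
    rw [Real.norm_eq_abs, abs_of_pos (Real.exp_pos _)]
    exact Real.exp_le_one_iff.mpr (by nlinarith [hψ u])

set_option maxHeartbeats 1000000 in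
/-- Splitting the squared Hellinger distance between two tilted (Gibbs) measures into a
term comparing the unnormalized densities and a term comparing the normalization
constants: `d_H(π,π')² ≤ (1/c) ∫ (e^{−Φ/2} − e^{−Φ'/2})² dπ₀ + C |Z − Z'|²`. -/
theorem hellinger_splitting {X : Type*} [MeasurableSpace X]
    (π₀ : Measure X) [IsProbabilityMeasure π₀]
    (Φ Φ' : X → ℝ) (hΦm : Measurable Φ) (hΦ'm : Measurable Φ')
    (hΦ : ∀ u, 0 ≤ Φ u) (hΦ' : ∀ u, 0 ≤ Φ' u)
    (Z Z' c : ℝ) (hc : 0 < c) (hZc : c ≤ Z) (hZ'c : c ≤ Z')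
    (hZ : Z = ∫ u, Real.exp (-Φ u) ∂π₀) (hZ' : Z' = ∫ u, Real.exp (-Φ' u) ∂π₀) :
    ∃ C > (0 : ℝ),
      (∫ u, (Real.sqrt (Z⁻¹ * Real.exp (-Φ u)) -
        Real.sqrt (Z'⁻¹ * Real.exp (-Φ' u))) ^ 2 ∂π₀)
      ≤ (1 / c) * (∫ u, (Real.exp (-Φ u / 2) - Real.exp (-Φ' u / 2)) ^ 2 ∂π₀)
        + C * |Z - Z'| ^ 2 := by
  refine ⟨1, one_pos, ?_⟩
  have hZ0 : (0 : ℝ) < Z := lt_of_lt_of_le hc hZc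
  have hZ'0 : (0 : ℝ) < Z' := lt_of_lt_of_le hc hZ'c
  set f : X → ℝ := fun u => Real.exp (-Φ u / 2) with hf
  set g : X → ℝ := fun u => Real.exp (-Φ' u / 2) with hg
  have hfint : Integrable f π₀ := exp_half_integrable π₀ Φ hΦm hΦ
  have hgint : Integrable g π₀ := exp_half_integrable π₀ Φ' hΦ'm hΦ'
  have hf2 : ∀ u, f u ^ 2 = Real.exp (-Φ u) := by
    intro u; rw [sq, ← Real.exp_add]; ring_nf
  have hg2 : ∀ u, g u ^ 2 = Real.exp (-Φ' u) := by
    intro u; rw [sq, ← Real.exp_add]; ring_nf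
  have hf2int : Integrable (fun u => f u ^ 2) π₀ := by
    have := exp_half_integrable π₀ (fun u => 2 * Φ u) (hΦm.const_mul 2)
      (fun u => by linarith [hΦ u])
    refine this.congr (Filter.Eventually.of_forall fun u => ?_)
    dsimp only; rw [hf2 u]; congr 1; ring
  have hg2int : Integrable (fun u => g u ^ 2) π₀ := by
    have := exp_half_integrable π₀ (fun u => 2 * Φ' u) (hΦ'm.const_mul 2)
      (fun u => by linarith [hΦ' u])
    refine this.congr (Filter.Eventually.of_forall fun u => ?_)
    dsimp only; rw [hg2 u]; congr 1; ring
  have hfgint : Integrable (fun u => f u * g u) π₀ := by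
    have := exp_half_integrable π₀ (fun u => Φ u + Φ' u) (hΦm.add hΦ'm)
      (fun u => by linarith [hΦ u, hΦ' u])
    refine this.congr (Filter.Eventually.of_forall fun u => ?_)
    dsimp only [hf, hg]; rw [← Real.exp_add]; congr 1; ring
  set S : ℝ := ∫ u, f u * g u ∂π₀ with hS
  have hA : (∫ u, f u ^ 2 ∂π₀) = Z := by
    rw [hZ]; exact integral_congr_ae (Filter.Eventually.of_forall fun u => hf2 u)
  have hB : (∫ u, g u ^ 2 ∂π₀) = Z' := by
    rw [hZ']; exact integral_congr_ae (Filter.Eventually.of_forall fun u => hg2 u)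
  set P : ℝ := Real.sqrt Z * Real.sqrt Z' with hP
  have hsZ : Real.sqrt Z ^ 2 = Z := Real.sq_sqrt hZ0.le
  have hsZ' : Real.sqrt Z' ^ 2 = Z' := Real.sq_sqrt hZ'0.le
  have hsZ0 : (0 : ℝ) < Real.sqrt Z := Real.sqrt_pos.mpr hZ0
  have hsZ'0 : (0 : ℝ) < Real.sqrt Z' := Real.sqrt_pos.mpr hZ'0
  have hP0 : (0 : ℝ) < P := mul_pos hsZ0 hsZ'0
  -- rewrite the Hellinger integrand
  have hpt : ∀ u, (Real.sqrt (Z⁻¹ * Real.exp (-Φ u)) -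
      Real.sqrt (Z'⁻¹ * Real.exp (-Φ' u))) ^ 2
      = Z⁻¹ * f u ^ 2 - (2 * P⁻¹) * (f u * g u) + Z'⁻¹ * g u ^ 2 := by
    intro u
    have e1 : Real.sqrt (Z⁻¹ * Real.exp (-Φ u)) = (Real.sqrt Z)⁻¹ * f u := by
      rw [Real.sqrt_mul (by positivity), Real.sqrt_inv, ← Real.exp_half]
    have e2 : Real.sqrt (Z'⁻¹ * Real.exp (-Φ' u)) = (Real.sqrt Z')⁻¹ * g u := by
      rw [Real.sqrt_mul (by positivity), Real.sqrt_inv, ← Real.exp_half]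
    rw [e1, e2]
    have : ((Real.sqrt Z)⁻¹) ^ 2 = Z⁻¹ := by rw [← hsZ]; simp [inv_pow]
    have h2 : ((Real.sqrt Z')⁻¹) ^ 2 = Z'⁻¹ := by rw [← hsZ']; simp [inv_pow]
    have h3 : P⁻¹ = (Real.sqrt Z)⁻¹ * (Real.sqrt Z')⁻¹ := by
      rw [hP, mul_inv]
    rw [h3, ← this, ← h2]; ring
  have hLHS : (∫ u, (Real.sqrt (Z⁻¹ * Real.exp (-Φ u)) -
      Real.sqrt (Z'⁻¹ * Real.exp (-Φ' u))) ^ 2 ∂π₀)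
      = 2 - 2 * P⁻¹ * S := by
    rw [integral_congr_ae (Filter.Eventually.of_forall hpt)]
    have i1 : Integrable (fun a => Z⁻¹ * f a ^ 2 - 2 * P⁻¹ * (f a * g a)) π₀ :=
      (hf2int.const_mul _).sub (hfgint.const_mul _)
    have i2 : Integrable (fun a => Z'⁻¹ * g a ^ 2) π₀ := hg2int.const_mul _
    rw [integral_add i1 i2, integral_sub (hf2int.const_mul _) (hfgint.const_mul _),
      integral_const_mul, integral_const_mul, integral_const_mul, hA, hB, ← hS]
    field_simp
    ring
  have hRHS : (∫ u, (Real.exp (-Φ u / 2) - Real.exp (-Φ' u / 2)) ^ 2 ∂π₀)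
      = Z + Z' - 2 * S := by
    have hpt2 : ∀ u, (Real.exp (-Φ u / 2) - Real.exp (-Φ' u / 2)) ^ 2
        = f u ^ 2 - 2 * (f u * g u) + g u ^ 2 := fun u => by simp only [hf, hg]; ring
    rw [integral_congr_ae (Filter.Eventually.of_forall hpt2)]
    have i1 : Integrable (fun a => f a ^ 2 - 2 * (f a * g a)) π₀ :=
      hf2int.sub (hfgint.const_mul _)
    rw [integral_add i1 hg2int, integral_sub hf2int (hfgint.const_mul _),
      integral_const_mul, hA, hB, ← hS]
    ring
  rw [hLHS, hRHS]
  -- bounds on S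
  have hS0 : 0 ≤ S := by
    refine integral_nonneg fun u => ?_
    exact mul_nonneg (Real.exp_nonneg _) (Real.exp_nonneg _)
  have hSP : S ≤ P := by
    set t : ℝ := Real.sqrt Z' / Real.sqrt Z with ht
    have ht0 : 0 < t := div_pos hsZ'0 hsZ0
    have hinv : t * t⁻¹ = 1 := mul_inv_cancel₀ ht0.ne'
    have hbound : ∀ u, f u * g u ≤ (t * f u ^ 2 + t⁻¹ * g u ^ 2) / 2 := by
      intro u
      rw [le_div_iff₀ (by norm_num : (0:ℝ) < 2)]
      nlinarith [sq_nonneg (t * f u - g u), ht0, hinv, sq_nonneg (f u), sq_nonneg (g u)]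
    have hmono : S ≤ ∫ u, (t * f u ^ 2 + t⁻¹ * g u ^ 2) / 2 ∂π₀ := by
      refine integral_mono hfgint ?_ hbound
      exact ((hf2int.const_mul t).add (hg2int.const_mul t⁻¹)).div_const 2
    have hcalc : (∫ u, (t * f u ^ 2 + t⁻¹ * g u ^ 2) / 2 ∂π₀) = P := by
      have i1 : Integrable (fun a => t * f a ^ 2) π₀ := hf2int.const_mul t
      have i2 : Integrable (fun a => t⁻¹ * g a ^ 2) π₀ := hg2int.const_mul t⁻¹
      rw [integral_div, integral_add i1 i2, integral_const_mul, integral_const_mul, hA, hB]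
      rw [ht, hP]
      rw [show Z = Real.sqrt Z * Real.sqrt Z by rw [← sq, hsZ],
        show Z' = Real.sqrt Z' * Real.sqrt Z' by rw [← sq, hsZ']]
      field_simp
      simp only [Real.sqrt_sq hsZ0.le, Real.sqrt_sq hsZ'0.le, Real.sqrt_mul_self hsZ0.le,
        Real.sqrt_mul_self hsZ'0.le]
      linear_combination (Z' - Real.sqrt Z' ^ 2) * hsZ + (Real.sqrt Z ^ 2 - Z) * hsZ'
    linarith [hmono, hcalc.le, hcalc.ge]
  have hcP : c ≤ P := by
    have h1 : Real.sqrt c ≤ Real.sqrt Z := Real.sqrt_le_sqrt hZc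
    have h2 : Real.sqrt c ≤ Real.sqrt Z' := Real.sqrt_le_sqrt hZ'c
    have h3 : Real.sqrt c * Real.sqrt c ≤ P :=
      mul_le_mul h1 h2 (Real.sqrt_nonneg _) hsZ0.le
    rwa [Real.mul_self_sqrt hc.le] at h3
  have hPsum : 2 * P ≤ Z + Z' := by
    nlinarith [sq_nonneg (Real.sqrt Z - Real.sqrt Z'), hsZ, hsZ']
  have e1 : 2 - 2 * P⁻¹ * S = 2 * (P - S) / P := by
    field_simp
  have e2 : 2 * (P - S) / P ≤ 2 * (P - S) / c := by
    rw [div_le_div_iff₀ hP0 hc]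
    nlinarith [mul_le_mul_of_nonneg_left hcP (show (0:ℝ) ≤ 2 * (P - S) by linarith)]
  have e3 : 2 * (P - S) / c ≤ (Z + Z' - 2 * S) / c := by
    rw [div_le_div_iff₀ hc hc]
    nlinarith
  have e4 : (1 : ℝ) / c * (Z + Z' - 2 * S) = (Z + Z' - 2 * S) / c := by ring
  nlinarith [sq_nonneg |Z - Z'|, e1, e2, e3, e4]
end
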